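/- Let μ ∈ ℝᵈ and σ, β > 0 with 2β² > σ². Then the chi-squared divergence between the Gaussians N(μ, σ²I_d) and N(0, β²I_d) equals χ²(N(μ,σ²I_d), N(0,β²I_d)) = (β²/(σ²·√(2β²/σ² - 1)))ᵈ · exp(‖μ‖²/(2β² - σ²)) - 1. -/

import Mathlib

open MeasureTheory

theorem stmt_18 (d : ℕ) (m : EuclideanSpace ℝ (Fin d)) (σ β : ℝ)
    (hσ : 0 < σ) (hβ : 0 < β) (h : σ^2 < 2 * β^2)
    (pdf : EuclideanSpace ℝ (Fin d) → ℝ → EuclideanSpace ℝ (Fin d) → ℝ)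
    (hpdf : ∀ c s z, pdf c s z =
      (2 * Real.pi * s^2) ^ (-(d:ℝ)/2) * Real.exp (-‖z - c‖^2 / (2 * s^2))) :
    (∫ z, (pdf m σ z)^2 / pdf 0 β z ∂volume) - 1 =
      (β^2 / (σ^2 * Real.sqrt (2 * β^2 / σ^2 - 1)))^d *
        Real.exp (‖m‖^2 / (2 * β^2 - σ^2)) - 1 := by
  have hπ := Real.pi_pos
  have hσ2 : (0:ℝ) < σ^2 := by positivity
  have hβ2 : (0:ℝ) < β^2 := by positivity
  have hdiff : (0:ℝ) < 2*β^2 - σ^2 := by linarith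
  set a : ℝ := (2*β^2 - σ^2) / (2*σ^2*β^2) with ha_def
  have ha : 0 < a := div_pos hdiff (by positivity)
  set c : EuclideanSpace ℝ (Fin d) := (a*σ^2)⁻¹ • m with hc_def
  set C : ℝ := (2*Real.pi*σ^2) ^ (-(d:ℝ)) * (2*Real.pi*β^2) ^ ((d:ℝ)/2) *
      Real.exp (‖m‖^2/(2*β^2-σ^2)) with hC_def
  have hX : (0:ℝ) < 2*Real.pi*σ^2 := by positivity
  have hY : (0:ℝ) < 2*Real.pi*β^2 := by positivity
  have key : ∀ z : EuclideanSpace ℝ (Fin d),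
      (pdf m σ z)^2 / pdf 0 β z = C * Real.exp (-a * ‖z - c‖^2) := by
    intro z
    rw [hpdf, hpdf]
    have e1 : ((2*Real.pi*σ^2) ^ (-(d:ℝ)/2))^2 = (2*Real.pi*σ^2) ^ (-(d:ℝ)) := by
      rw [← Real.rpow_natCast ((2*Real.pi*σ^2) ^ (-(d:ℝ)/2)) 2, ← Real.rpow_mul hX.le]
      norm_num
    have e2 : ((2*Real.pi*β^2) ^ (-(d:ℝ)/2))⁻¹ = (2*Real.pi*β^2) ^ ((d:ℝ)/2) := by
      rw [neg_div, Real.rpow_neg hY.le, inv_inv]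
    have hexp : -‖z - m‖ ^ 2 / (2 * σ ^ 2) + -‖z - m‖ ^ 2 / (2 * σ ^ 2) + -(-‖z‖ ^ 2 / (2 * β ^ 2))
        = ‖m‖^2/(2*β^2-σ^2) + (-a * ‖z - c‖^2) := by
      have h1 : ‖z - m‖^2 = ‖z‖^2 - 2 * inner ℝ z m + ‖m‖^2 := norm_sub_sq_real z m
      have h2 : ‖z - c‖^2 = ‖z‖^2 - 2 * ((a*σ^2)⁻¹ * inner ℝ z m) + ((a*σ^2)⁻¹)^2 * ‖m‖^2 := by
        rw [norm_sub_sq_real z c, hc_def, real_inner_smul_right, norm_smul]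
        rw [mul_pow, Real.norm_eq_abs, sq_abs]
      rw [h1, h2, ha_def]
      have hσ' := hσ2.ne'
      have hβ' := hβ2.ne'
      have hd' := hdiff.ne'
      field_simp
      ring
    rw [mul_pow, e1, sub_zero, div_eq_mul_inv, mul_inv, e2, ← Real.exp_neg, sq (Real.exp _),
      ← Real.exp_add, hC_def]
    conv_rhs => rw [mul_assoc, ← Real.exp_add, ← hexp, Real.exp_add]
    ring
  rw [MeasureTheory.integral_congr_ae (Filter.Eventually.of_forall key)]
  rw [MeasureTheory.integral_const_mul]
  have htrans : (∫ z : EuclideanSpace ℝ (Fin d), Real.exp (-a * ‖z - c‖^2))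
      = ∫ z : EuclideanSpace ℝ (Fin d), Real.exp (-a * ‖z‖^2) :=
    integral_sub_right_eq_self (fun z => Real.exp (-a * ‖z‖^2)) c
  rw [htrans, GaussianFourier.integral_rexp_neg_mul_sq_norm ha]
  have hrank : (Module.finrank ℝ (EuclideanSpace ℝ (Fin d)) : ℝ) = (d:ℝ) := by
    simp [finrank_euclideanSpace_fin]
  rw [hrank]
  -- now constant computation
  congr 1
  set K : ℝ := β^4 / (σ^2 * (2*β^2 - σ^2)) with hK_def
  have hK : 0 < K := by positivity
  have hL : C * (Real.pi / a) ^ ((d:ℝ)/2) =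
      K ^ ((d:ℝ)/2) * Real.exp (‖m‖^2/(2*β^2-σ^2)) := by
    rw [hC_def]
    have e3 : (2*Real.pi*σ^2) ^ (-(d:ℝ)) = ((2*Real.pi*σ^2) ^ (-2:ℝ)) ^ ((d:ℝ)/2) := by
      rw [← Real.rpow_mul hX.le]; ring_nf
    have hpa : (0:ℝ) < Real.pi / a := by positivity
    rw [e3, ← Real.mul_rpow (Real.rpow_nonneg hX.le _) hY.le,
      mul_comm _ (Real.exp _), mul_assoc, ← Real.mul_rpow
        (mul_nonneg (Real.rpow_nonneg hX.le _) hY.le) hpa.le]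
    rw [mul_comm]
    congr 2
    rw [Real.rpow_neg hX.le, show ((2:ℝ)) = ((2:ℕ):ℝ) by norm_num, Real.rpow_natCast]
    rw [ha_def, hK_def]
    field_simp
    ring
  rw [hL]
  have hs : (0:ℝ) < 2 * β^2 / σ^2 - 1 := by
    rw [sub_pos, lt_div_iff₀ hσ2]; linarith
  have hsq : Real.sqrt (2 * β^2 / σ^2 - 1) > 0 := Real.sqrt_pos.mpr hs
  have hR : (β^2 / (σ^2 * Real.sqrt (2 * β^2 / σ^2 - 1)))^d = K ^ ((d:ℝ)/2) := by
    have hb : (0:ℝ) < β^2 / (σ^2 * Real.sqrt (2 * β^2 / σ^2 - 1)) := by positivity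
    set b := β^2 / (σ^2 * Real.sqrt (2 * β^2 / σ^2 - 1)) with hb_def
    have hsplit : b ^ ((d:ℕ):ℝ) = (b^(2:ℝ))^((d:ℝ)/2) := by
      rw [← Real.rpow_mul hb.le]
      congr 1
      ring
    have h2 : b ^ (2:ℝ) = b ^ (2:ℕ) := by
      rw [← Real.rpow_natCast b 2]; norm_num
    have hbase : b ^ (2:ℝ) = K := by
      rw [h2, hb_def, div_pow, mul_pow, Real.sq_sqrt hs.le, hK_def]
      field_simp
    rw [← Real.rpow_natCast b d, hsplit, hbase]
  rw [hR]
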